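/- arXiv:1203.1867 — 4 statements merged into one kernel-verified Lean document; each statement's English description precedes it below -/
import Mathlib

section
/- (Uniform form of the combinatorial lemma.) In the setting of the jump data and the matrix θ: for every 1 ≤ ρ ≤ e, one has ı_ρ + 1 = Σ'_μ (θ_{μ,ρ} + 1), where the sum Σ'_μ runs over all μ with 1 ≤ μ ≤ N such that θ_{μ,ρ} ≠ 0. -/
/- Setting of the jump data and the matrix θ (Saidi/Pop, §3 A):
`p` is a prime, `e ≥ 1`, and `u 1 ≤ … ≤ u e` are the upper ramification jumps (with
`u 0 = 0`), satisfying `p * u (ρ-1) ≤ u ρ` with strict inequality iff `p ∤ u ρ`.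
For each `1 ≤ ρ ≤ e` write `u ρ - p * u (ρ-1) = p * q ρ + ε ρ` with `0 ≤ ε ρ < p`.
The essential indices (those with `q ρ > 0`) are enumerated in increasing order by
`r 1 < … < r e₀`, with the convention `r (e₀+1) = e+1`.  Set `d 0 = 1`,
`d i = d (i-1) + q (r i)` and `N = 1 + q 1 + … + q e`.  The matrix `θ` is defined by
`θ μ 0 = 0`, `θ 1 ρ = p * θ 1 (ρ-1) + ε ρ`, and, for `1 ≤ i ≤ e₀` and
`d (i-1) < μ ≤ d i`: `θ μ ρ = 0` for `ρ < r i` and `θ μ ρ = p * θ μ (ρ-1) + (p-1)`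
for `r i ≤ ρ ≤ e`. -/
/-- **Uniform form of the combinatorial lemma.** For every `1 ≤ ρ ≤ e`, one has
`u ρ + 1 = Σ'_μ (θ μ ρ + 1)`, the sum running over all `1 ≤ μ ≤ N` with `θ μ ρ ≠ 0`. -/
theorem theta_combinatorial_lemma_uniform
    (p e e₀ N : ℕ) (hp : p.Prime) (he : 1 ≤ e)
    (u q ε r d : ℕ → ℕ) (θ : ℕ → ℕ → ℕ)
    (hu0 : u 0 = 0)
    (hupos : ∀ ρ ∈ Finset.Icc 1 e, 1 ≤ u ρ)
    (hule : ∀ ρ ∈ Finset.Icc 1 e, p * u (ρ - 1) ≤ u ρ)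
    (hult : ∀ ρ ∈ Finset.Icc 1 e, (p * u (ρ - 1) < u ρ ↔ ¬ p ∣ u ρ))
    (hqε : ∀ ρ ∈ Finset.Icc 1 e, u ρ = p * u (ρ - 1) + p * q ρ + ε ρ)
    (hε : ∀ ρ ∈ Finset.Icc 1 e, ε ρ < p)
    (hrmono : StrictMonoOn r (Set.Icc 1 e₀))
    (hress : ∀ ρ, (ρ ∈ Finset.Icc 1 e ∧ 0 < q ρ) ↔ ∃ i ∈ Finset.Icc 1 e₀, r i = ρ)
    (hrtop : r (e₀ + 1) = e + 1)
    (hd0 : d 0 = 1)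
    (hd : ∀ i ∈ Finset.Icc 1 e₀, d i = d (i - 1) + q (r i))
    (hN : N = 1 + ∑ ρ ∈ Finset.Icc 1 e, q ρ)
    (hθ0 : ∀ μ ∈ Finset.Icc 1 N, θ μ 0 = 0)
    (hθ1 : ∀ ρ ∈ Finset.Icc 1 e, θ 1 ρ = p * θ 1 (ρ - 1) + ε ρ)
    (hθlow : ∀ i ∈ Finset.Icc 1 e₀, ∀ μ, d (i - 1) < μ → μ ≤ d i →
      ∀ ρ, 1 ≤ ρ → ρ < r i → θ μ ρ = 0)
    (hθhigh : ∀ i ∈ Finset.Icc 1 e₀, ∀ μ, d (i - 1) < μ → μ ≤ d i →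
      ∀ ρ, r i ≤ ρ → ρ ≤ e → θ μ ρ = p * θ μ (ρ - 1) + (p - 1)) :
    ∀ ρ ∈ Finset.Icc 1 e,
      u ρ + 1 = ∑ μ ∈ (Finset.Icc 1 N).filter (fun μ => θ μ ρ ≠ 0), (θ μ ρ + 1) := by
  have hp2 : 2 ≤ p := hp.two_le
  have hppos : 0 < p := by omega
  have hN1 : 1 ≤ N := by omega
  -- if ε ρ = 0 then q ρ = 0
  have hqzero : ∀ ρ ∈ Finset.Icc 1 e, ε ρ = 0 → q ρ = 0 := by
    intro ρ hρ h0
    by_contra hq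
    have h1 := hqε ρ hρ
    have hdvd : p ∣ u ρ := ⟨u (ρ - 1) + q ρ, by rw [h1, h0]; ring⟩
    have hlt : p * u (ρ - 1) < u ρ := by
      have : 0 < q ρ := Nat.pos_of_ne_zero hq
      nlinarith
    exact ((hult ρ hρ).1 hlt) hdvd
  -- θ 1 ρ is positive for ρ in [1,e]
  have hθ1pos : ∀ ρ ∈ Finset.Icc 1 e, 0 < θ 1 ρ := by
    intro ρ
    induction ρ with
    | zero => intro h; simp at h
    | succ n ih =>
      intro hmem
      have h1 := hθ1 (n + 1) hmem
      simp only [Nat.add_sub_cancel] at h1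
      rcases Nat.eq_zero_or_pos (ε (n + 1)) with h0 | h0
      · have hq0 := hqzero (n + 1) hmem h0
        rcases Nat.eq_zero_or_pos n with rfl | hn
        · have hq1 := hqε 1 hmem
          have hu1 := hupos 1 hmem
          simp only [Nat.zero_add] at h0 hq0
          simp only [hu0, h0, hq0, Nat.mul_zero, Nat.add_zero, Nat.zero_add] at hq1
          omega
        · have hnmem : n ∈ Finset.Icc 1 e := by
            simp only [Finset.mem_Icc] at *; omega
          have hpos := ih hnmem
          have : 0 < p * θ 1 n := Nat.mul_pos hppos hpos
          omega
      · omega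
  -- formula for u
  have hG : ∀ t, t ≤ e → u t = θ 1 t + ∑ σ ∈ Finset.Icc 1 t, q σ * p ^ (t - σ + 1) := by
    intro t
    induction t with
    | zero =>
      intro _
      have hθ10 : θ 1 0 = 0 := hθ0 1 (by simp only [Finset.mem_Icc]; omega)
      simp [hu0, hθ10]
    | succ n ih =>
      intro hle
      have hmem : n + 1 ∈ Finset.Icc 1 e := by simp only [Finset.mem_Icc]; omega
      have h1 := hqε (n + 1) hmem
      have h2 := hθ1 (n + 1) hmem
      simp only [Nat.add_sub_cancel] at h1 h2
      have hgs : (∑ σ ∈ Finset.Icc 1 (n + 1), q σ * p ^ (n + 1 - σ + 1))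
          = (∑ σ ∈ Finset.Icc 1 n, q σ * p ^ (n - σ + 1)) * p + q (n + 1) * p := by
        rw [Finset.sum_Icc_succ_top (by omega : 1 ≤ n + 1)]
        have e1 : n + 1 - (n + 1) + 1 = 1 := by omega
        rw [e1, pow_one, Finset.sum_mul]
        congr 1
        refine Finset.sum_congr rfl ?_
        intro σ hσ
        simp only [Finset.mem_Icc] at hσ
        rw [mul_assoc, ← pow_succ]
        congr 2
        omega
      rw [h1, h2, hgs, ih (by omega)]
      ring
  -- essential index facts
  have hrF : ∀ i ∈ Finset.Icc 1 e₀, r i ∈ Finset.Icc 1 e ∧ 0 < q (r i) := by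
    intro i hi
    exact (hress (r i)).2 ⟨i, hi, rfl⟩
  -- d is monotone
  have hdmono : ∀ i j, i ≤ j → j ≤ e₀ → d i ≤ d j := by
    intro i j hij
    induction j with
    | zero =>
      intro _
      have : i = 0 := by omega
      rw [this]
    | succ n ih =>
      intro hje
      rcases Nat.lt_or_ge i (n + 1) with h | h
      · have h1 : d i ≤ d n := ih (by omega) (by omega)
        have hdn := hd (n + 1) (by simp only [Finset.mem_Icc]; omega)
        simp only [Nat.add_sub_cancel] at hdn
        omega
      · have h' : i = n + 1 := by omega
        rw [h']
  have hdsum : ∀ j, j ≤ e₀ → d j = 1 + ∑ i ∈ Finset.Icc 1 j, q (r i) := by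
    intro j
    induction j with
    | zero => intro _; simp [hd0]
    | succ n ih =>
      intro hj
      rw [Finset.sum_Icc_succ_top (by omega : 1 ≤ n + 1)]
      have hdn := hd (n + 1) (by simp only [Finset.mem_Icc]; omega)
      simp only [Nat.add_sub_cancel] at hdn
      rw [hdn, ih (by omega)]
      ring
  -- bijection between essential indices ≤ t and support of q on [1,t]
  have hbij : ∀ t, t ≤ e → ∀ f : ℕ → ℕ,
      (∑ i ∈ (Finset.Icc 1 e₀).filter (fun i => r i ≤ t), q (r i) * f (r i))
        = ∑ σ ∈ Finset.Icc 1 t, q σ * f σ := by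
    intro t ht f
    have hz : ∀ σ ∈ Finset.Icc 1 t,
        σ ∉ (Finset.Icc 1 t).filter (fun σ => 0 < q σ) → q σ * f σ = 0 := by
      intro σ hσ hnσ
      simp only [Finset.mem_filter] at hnσ
      have : q σ = 0 := by
        by_contra h
        exact hnσ ⟨hσ, Nat.pos_of_ne_zero h⟩
      simp [this]
    rw [← Finset.sum_subset (Finset.filter_subset _ _) hz]
    refine Finset.sum_bij (fun i _ => r i) ?_ ?_ ?_ ?_
    · intro i hi
      simp only [Finset.mem_filter, Finset.mem_Icc] at hi ⊢
      obtain ⟨hm, hq⟩ := hrF i (Finset.mem_Icc.mpr hi.1)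
      simp only [Finset.mem_Icc] at hm
      exact ⟨⟨hm.1, hi.2⟩, hq⟩
    · intro a ha b hb hab
      simp only [Finset.mem_filter, Finset.mem_Icc] at ha hb
      exact hrmono.injOn (Set.mem_Icc.mpr ha.1) (Set.mem_Icc.mpr hb.1) hab
    · intro σ hσ
      simp only [Finset.mem_filter, Finset.mem_Icc] at hσ
      obtain ⟨i, hi, hri⟩ := (hress σ).1
        ⟨Finset.mem_Icc.mpr ⟨hσ.1.1, le_trans hσ.1.2 ht⟩, hσ.2⟩
      refine ⟨i, Finset.mem_filter.mpr ⟨hi, by rw [hri]; exact hσ.1.2⟩, hri⟩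
    · intro a ha
      rfl
  have hdN : d e₀ = N := by
    have h1 := hdsum e₀ le_rfl
    have h2 := hbij e le_rfl (fun _ => 1)
    have h3 : (Finset.Icc 1 e₀).filter (fun i => r i ≤ e) = Finset.Icc 1 e₀ := by
      apply Finset.filter_true_of_mem
      intro i hi
      have hh := hrF i hi
      simp only [Finset.mem_Icc] at hh
      exact hh.1.2
    rw [h3] at h2
    simp only [mul_one] at h2
    rw [hN, h1, h2]
  -- block values
  have hblock : ∀ i ∈ Finset.Icc 1 e₀, ∀ μ, d (i - 1) < μ → μ ≤ d i →
      ∀ k, r i + k ≤ e → θ μ (r i + k) + 1 = p ^ (k + 1) := by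
    intro i hi μ hμ1 hμ2 k
    have hiI := hi
    simp only [Finset.mem_Icc] at hiI
    have hμN : μ ∈ Finset.Icc 1 N := by
      simp only [Finset.mem_Icc]
      have h1 : d 0 ≤ d (i - 1) := hdmono 0 (i - 1) (by omega) (by omega)
      have h2 : d i ≤ d e₀ := hdmono i e₀ hiI.2 le_rfl
      omega
    have hr1 : 1 ≤ r i ∧ r i ≤ e := by
      have hh := hrF i hi
      simp only [Finset.mem_Icc] at hh
      exact hh.1
    induction k with
    | zero =>
      intro hk
      have hke : r i ≤ e := by omega
      have hh := hθhigh i hi μ hμ1 hμ2 (r i) le_rfl hke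
      have h0 : θ μ (r i - 1) = 0 := by
        rcases Nat.eq_or_lt_of_le hr1.1 with h | h
        · rw [← h]
          exact hθ0 μ hμN
        · exact hθlow i hi μ hμ1 hμ2 (r i - 1) (by omega) (by omega)
      show θ μ (r i) + 1 = p ^ 1
      rw [hh, h0, mul_zero, zero_add, pow_one]
      omega
    | succ n ih =>
      intro hk
      have hh := hθhigh i hi μ hμ1 hμ2 (r i + (n + 1)) (by omega) hk
      have hstep : r i + (n + 1) - 1 = r i + n := by omega
      rw [hstep] at hh
      have ihn := ih (by omega)
      rw [hh]
      have hre : p * θ μ (r i + n) + (p - 1) + 1 = p * (θ μ (r i + n) + 1) := by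
        rw [Nat.mul_add, Nat.mul_one]
        omega
      rw [hre, ihn, pow_succ]
      ring
  -- main computation
  intro ρ hρ
  have hρI := hρ
  simp only [Finset.mem_Icc] at hρI
  rw [Finset.sum_filter]
  have hsplit : Finset.Icc 1 N = insert 1 (Finset.Icc 2 N) := by
    ext x
    simp only [Finset.mem_insert, Finset.mem_Icc]
    omega
  rw [hsplit, Finset.sum_insert (by simp)]
  have hpos1 := hθ1pos ρ hρ
  rw [if_pos (by omega : θ 1 ρ ≠ 0)]
  have hIoc : Finset.Icc 2 N = Finset.Ioc (d 0) (d e₀) := by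
    ext x
    simp only [Finset.mem_Icc, Finset.mem_Ioc]
    omega
  have htel : ∀ j, j ≤ e₀ → ∀ f : ℕ → ℕ,
      (∑ μ ∈ Finset.Ioc (d 0) (d j), f μ)
        = ∑ i ∈ Finset.Icc 1 j, ∑ μ ∈ Finset.Ioc (d (i - 1)) (d i), f μ := by
    intro j
    induction j with
    | zero => intro _ f; simp
    | succ n ih =>
      intro hj f
      rw [Finset.sum_Icc_succ_top (by omega : 1 ≤ n + 1)]
      have hdn : d n ≤ d (n + 1) := hdmono n (n + 1) (by omega) hj
      rw [← Finset.sum_Ioc_consecutive f (hdmono 0 n (by omega) (by omega)) hdn]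
      rw [ih (by omega) f]
      simp only [Nat.add_sub_cancel]
  have hinner : ∀ i ∈ Finset.Icc 1 e₀,
      (∑ μ ∈ Finset.Ioc (d (i - 1)) (d i), if θ μ ρ ≠ 0 then θ μ ρ + 1 else 0)
        = if r i ≤ ρ then q (r i) * p ^ (ρ - r i + 1) else 0 := by
    intro i hi
    by_cases hcase : r i ≤ ρ
    · rw [if_pos hcase]
      have hval : ∀ μ ∈ Finset.Ioc (d (i - 1)) (d i),
          (if θ μ ρ ≠ 0 then θ μ ρ + 1 else 0) = p ^ (ρ - r i + 1) := by
        intro μ hμ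
        simp only [Finset.mem_Ioc] at hμ
        have hb := hblock i hi μ hμ.1 hμ.2 (ρ - r i) (by omega)
        have hr : r i + (ρ - r i) = ρ := by omega
        rw [hr] at hb
        have hge : 2 ≤ p ^ (ρ - r i + 1) := by
          calc 2 ≤ p := hp2
          _ = p ^ 1 := (pow_one p).symm
          _ ≤ p ^ (ρ - r i + 1) := Nat.pow_le_pow_right (by omega) (by omega)
        rw [if_pos (by omega : θ μ ρ ≠ 0), hb]
      rw [Finset.sum_congr rfl hval, Finset.sum_const, smul_eq_mul, Nat.card_Ioc,
        hd i hi]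
      congr 1
      omega
    · rw [if_neg hcase]
      apply Finset.sum_eq_zero
      intro μ hμ
      simp only [Finset.mem_Ioc] at hμ
      have h0 := hθlow i hi μ hμ.1 hμ.2 ρ hρI.1 (by omega)
      simp [h0]
  rw [hIoc, htel e₀ le_rfl, Finset.sum_congr rfl hinner, ← Finset.sum_filter]
  have hb2 := hbij ρ hρI.2 (fun σ => p ^ (ρ - σ + 1))
  rw [hb2]
  have hfin := hG ρ hρI.2
  omega
end

section
/- (Support of the matrix θ.) In the setting of the jump data and the matrix θ, suppose e₀ > 0. Let 1 ≤ ρ ≤ e and let i with 1 ≤ i ≤ e₀ be the unique index such that r_i ≤ ρ < r_{i+1} (assuming r_1 ≤ ρ). Then for every μ with 1 ≤ μ ≤ N one has: θ_{μ,ρ} ≠ 0 if and only if μ ≤ d_i. Moreover, for ρ < r_1 one has θ_{μ,ρ} ≠ 0 if and only if μ = 1. -/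
/- Setting of the jump data and the matrix θ (Saidi/Pop, §3 A):
`p` is a prime, `e ≥ 1`, and `u 1 ≤ … ≤ u e` are the upper ramification jumps (with
`u 0 = 0`), satisfying `p * u (ρ-1) ≤ u ρ` with strict inequality iff `p ∤ u ρ`.
For each `1 ≤ ρ ≤ e` write `u ρ - p * u (ρ-1) = p * q ρ + ε ρ` with `0 ≤ ε ρ < p`.
The essential indices (those with `q ρ > 0`) are enumerated in increasing order by
`r 1 < … < r e₀`, with the convention `r (e₀+1) = e+1`.  Set `d 0 = 1`,
`d i = d (i-1) + q (r i)` and `N = 1 + q 1 + … + q e`.  The matrix `θ` is defined by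
`θ μ 0 = 0`, `θ 1 ρ = p * θ 1 (ρ-1) + ε ρ`, and, for `1 ≤ i ≤ e₀` and
`d (i-1) < μ ≤ d i`: `θ μ ρ = 0` for `ρ < r i` and `θ μ ρ = p * θ μ (ρ-1) + (p-1)`
for `r i ≤ ρ ≤ e`. -/
/-- **Support of the matrix `θ`.** Suppose `e₀ > 0`.  If `1 ≤ ρ ≤ e` and `i` with
`1 ≤ i ≤ e₀` satisfies `r i ≤ ρ < r (i+1)`, then for `1 ≤ μ ≤ N`: `θ μ ρ ≠ 0 ↔ μ ≤ d i`.
Moreover, for `ρ < r 1` one has `θ μ ρ ≠ 0 ↔ μ = 1`. -/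
theorem theta_support
    (p e e₀ N : ℕ) (hp : p.Prime) (he : 1 ≤ e)
    (u q ε r d : ℕ → ℕ) (θ : ℕ → ℕ → ℕ)
    (hu0 : u 0 = 0)
    (hupos : ∀ ρ ∈ Finset.Icc 1 e, 1 ≤ u ρ)
    (hule : ∀ ρ ∈ Finset.Icc 1 e, p * u (ρ - 1) ≤ u ρ)
    (hult : ∀ ρ ∈ Finset.Icc 1 e, (p * u (ρ - 1) < u ρ ↔ ¬ p ∣ u ρ))
    (hqε : ∀ ρ ∈ Finset.Icc 1 e, u ρ = p * u (ρ - 1) + p * q ρ + ε ρ)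
    (hε : ∀ ρ ∈ Finset.Icc 1 e, ε ρ < p)
    (hrmono : StrictMonoOn r (Set.Icc 1 e₀))
    (hress : ∀ ρ, (ρ ∈ Finset.Icc 1 e ∧ 0 < q ρ) ↔ ∃ i ∈ Finset.Icc 1 e₀, r i = ρ)
    (hrtop : r (e₀ + 1) = e + 1)
    (hd0 : d 0 = 1)
    (hd : ∀ i ∈ Finset.Icc 1 e₀, d i = d (i - 1) + q (r i))
    (hN : N = 1 + ∑ ρ ∈ Finset.Icc 1 e, q ρ)
    (hθ0 : ∀ μ ∈ Finset.Icc 1 N, θ μ 0 = 0)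
    (hθ1 : ∀ ρ ∈ Finset.Icc 1 e, θ 1 ρ = p * θ 1 (ρ - 1) + ε ρ)
    (hθlow : ∀ i ∈ Finset.Icc 1 e₀, ∀ μ, d (i - 1) < μ → μ ≤ d i →
      ∀ ρ, 1 ≤ ρ → ρ < r i → θ μ ρ = 0)
    (hθhigh : ∀ i ∈ Finset.Icc 1 e₀, ∀ μ, d (i - 1) < μ → μ ≤ d i →
      ∀ ρ, r i ≤ ρ → ρ ≤ e → θ μ ρ = p * θ μ (ρ - 1) + (p - 1))
    (he₀ : 0 < e₀) :
    (∀ ρ ∈ Finset.Icc 1 e, ∀ i ∈ Finset.Icc 1 e₀, r i ≤ ρ → ρ < r (i + 1) →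
      ∀ μ ∈ Finset.Icc 1 N, (θ μ ρ ≠ 0 ↔ μ ≤ d i)) ∧
    (∀ ρ ∈ Finset.Icc 1 e, ρ < r 1 →
      ∀ μ ∈ Finset.Icc 1 N, (θ μ ρ ≠ 0 ↔ μ = 1)) := by
  have hp2 : 2 ≤ p := hp.two_le
  have h1e : (1:ℕ) ∈ Finset.Icc 1 e := Finset.mem_Icc.mpr ⟨le_refl 1, he⟩
  have hN1 : 1 ≤ N := hN ▸ Nat.le_add_right 1 _
  have hθ10 : θ 1 0 = 0 := hθ0 1 (Finset.mem_Icc.mpr ⟨le_refl 1, hN1⟩)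
  -- ε 1 > 0
  have hε1 : 0 < ε 1 := by
    by_contra h
    push_neg at h
    have hε0 : ε 1 = 0 := Nat.le_zero.mp h
    have hu1 : u 1 = p * q 1 := by
      have h' := hqε 1 h1e
      rw [show (1:ℕ) - 1 = 0 from rfl, hu0] at h'
      omega
    have hnd : ¬ p ∣ u 1 := by
      refine (hult 1 h1e).mp ?_
      rw [show (1:ℕ) - 1 = 0 from rfl, hu0]
      have := hupos 1 h1e
      omega
    exact hnd ⟨q 1, hu1⟩
  -- positivity of the first row
  have hθ1pos : ∀ ρ, 1 ≤ ρ → ρ ≤ e → 0 < θ 1 ρ := by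
    intro ρ
    induction ρ with
    | zero => omega
    | succ n ih =>
      intro _ hne
      have hmem : n + 1 ∈ Finset.Icc 1 e := Finset.mem_Icc.mpr ⟨by omega, hne⟩
      have heq := hθ1 (n+1) hmem
      rw [Nat.add_sub_cancel] at heq
      rcases Nat.eq_zero_or_pos n with h0 | h0
      · subst h0
        simp only [Nat.zero_add] at heq ⊢
        rw [heq, hθ10]
        omega
      · have hpn := ih h0 (by omega)
        have := Nat.mul_pos (show 0 < p by omega) hpn
        omega
  have hq' : ∀ i, 1 ≤ i → i ≤ e₀ → r i ∈ Finset.Icc 1 e ∧ 0 < q (r i) :=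
    fun i h1 h2 => (hress (r i)).mpr ⟨i, Finset.mem_Icc.mpr ⟨h1, h2⟩, rfl⟩
  -- monotonicity of d
  have hdmono : ∀ i j, i ≤ j → j ≤ e₀ → d i ≤ d j := by
    intro i j hij
    induction j, hij using Nat.le_induction with
    | base => intro _; exact le_refl _
    | succ n hn ih =>
      intro hne
      have h := hd (n+1) (Finset.mem_Icc.mpr ⟨by omega, hne⟩)
      rw [Nat.add_sub_cancel] at h
      have := ih (by omega)
      omega
  -- d e₀ = N
  have hsum : ∑ i ∈ Finset.Icc 1 e₀, q (r i) = ∑ ρ ∈ Finset.Icc 1 e, q ρ := by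
    rw [← Finset.sum_filter_ne_zero (Finset.Icc 1 e)]
    refine Finset.sum_bij (fun i _ => r i) ?_ ?_ ?_ ?_
    · intro i hi
      rw [Finset.mem_Icc] at hi
      obtain ⟨h1, h2⟩ := hq' i hi.1 hi.2
      exact Finset.mem_filter.mpr ⟨h1, h2.ne'⟩
    · intro a ha b hb hab
      rw [Finset.mem_Icc] at ha hb
      exact hrmono.injOn (Set.mem_Icc.mpr ha) (Set.mem_Icc.mpr hb) hab
    · intro ρ hρ
      rw [Finset.mem_filter] at hρ
      obtain ⟨i, hi, hri⟩ := (hress ρ).mp ⟨hρ.1, by omega⟩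
      exact ⟨i, hi, hri⟩
    · intro i hi; rfl
  have hdN : ∀ k, k ≤ e₀ → d k = 1 + ∑ i ∈ Finset.Icc 1 k, q (r i) := by
    intro k
    induction k with
    | zero => intro _; simp [hd0]
    | succ n ih =>
      intro h
      rw [hd (n+1) (Finset.mem_Icc.mpr ⟨by omega, h⟩), Nat.add_sub_cancel,
        ih (by omega), Finset.sum_Icc_succ_top (by omega : 1 ≤ n + 1)]
      ring
  have hde₀ : d e₀ = N := by rw [hdN e₀ le_rfl, hsum, hN]
  -- block decomposition
  have hblock : ∀ μ, 2 ≤ μ → μ ≤ N → ∃ j, 1 ≤ j ∧ j ≤ e₀ ∧ d (j-1) < μ ∧ μ ≤ d j := by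
    intro μ h2 hμN
    have hne : ((Finset.Icc 1 e₀).filter (fun j => μ ≤ d j)).Nonempty :=
      ⟨e₀, Finset.mem_filter.mpr ⟨Finset.mem_Icc.mpr ⟨he₀, le_rfl⟩, hde₀ ▸ hμN⟩⟩
    obtain ⟨j, hjmem, hjmin⟩ := Finset.exists_min_image _ id hne
    rw [Finset.mem_filter, Finset.mem_Icc] at hjmem
    refine ⟨j, hjmem.1.1, hjmem.1.2, ?_, hjmem.2⟩
    rcases Nat.eq_or_lt_of_le hjmem.1.1 with h1 | h1
    · rw [← h1, show (1:ℕ) - 1 = 0 from rfl, hd0]; omega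
    · by_contra hc
      push_neg at hc
      have hle := hjmin (j - 1)
        (Finset.mem_filter.mpr ⟨Finset.mem_Icc.mpr ⟨by omega, by omega⟩, hc⟩)
      simp only [id] at hle
      omega
  have hrpos : 1 ≤ r 1 := (Finset.mem_Icc.mp (hq' 1 le_rfl he₀).1).1
  -- r monotone (non-strict)
  have hrm : ∀ a b, 1 ≤ a → a ≤ b → b ≤ e₀ → r a ≤ r b := by
    intro a b h1 hab hbe
    exact hrmono.monotoneOn (Set.mem_Icc.mpr ⟨h1, le_trans hab hbe⟩)
      (Set.mem_Icc.mpr ⟨le_trans h1 hab, hbe⟩) hab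
  constructor
  · intro ρ hρ i hi hriρ hρri1 μ hμ
    rw [Finset.mem_Icc] at hρ hi hμ
    have hri1 : 1 ≤ r i := (Finset.mem_Icc.mp (hq' i hi.1 hi.2).1).1
    rcases Nat.lt_or_ge μ 2 with h2 | h2
    · have hμ1 : μ = 1 := by omega
      subst hμ1
      have hpos1 : 0 < θ 1 ρ := hθ1pos ρ (by omega) hρ.2
      have hd1 : 1 ≤ d i := le_trans (le_of_eq hd0.symm) (hdmono 0 i (by omega) hi.2)
      exact ⟨fun _ => hd1, fun _ => hpos1.ne'⟩
    · obtain ⟨j, hj1, hje, hdj, hdj'⟩ := hblock μ h2 hμ.2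
      rcases le_or_gt j i with hji | hij
      · -- both sides true
        have hrj : r j ≤ ρ := le_trans (hrm j i hj1 hji hi.2) hriρ
        have heq := hθhigh j (Finset.mem_Icc.mpr ⟨hj1, hje⟩) μ hdj hdj' ρ hrj hρ.2
        have hdi : μ ≤ d i := le_trans hdj' (hdmono j i hji hi.2)
        exact ⟨fun _ => hdi, fun _ => by omega⟩
      · -- both sides false
        have hrj : ρ < r j := lt_of_lt_of_le hρri1 (hrm (i+1) j (by omega) hij hje)
        have hzero := hθlow j (Finset.mem_Icc.mpr ⟨hj1, hje⟩) μ hdj hdj' ρ (by omega) hrj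
        have hdi : d i ≤ d (j-1) := hdmono i (j-1) (by omega) (by omega)
        rw [hzero]
        omega
  · intro ρ hρ hρr1 μ hμ
    rw [Finset.mem_Icc] at hρ hμ
    rcases Nat.lt_or_ge μ 2 with h2 | h2
    · have hμ1 : μ = 1 := by omega
      subst hμ1
      exact ⟨fun _ => rfl, fun _ => (hθ1pos ρ hρ.1 hρ.2).ne'⟩
    · obtain ⟨j, hj1, hje, hdj, hdj'⟩ := hblock μ h2 hμ.2
      have hrj : ρ < r j := lt_of_lt_of_le hρr1 (hrm 1 j le_rfl hj1 hje)
      have hzero := hθlow j (Finset.mem_Icc.mpr ⟨hj1, hje⟩) μ hdj hdj' ρ hρ.1 hrj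
      rw [hzero]
      omega
end

section
/- (Equality of different degrees in the deformation.) In the setting of the jump data and the matrix θ, the following identity of non-negative integers holds: Σ_{ρ=1}^{e} (θ_{1,ρ} + 1)(p^ρ − p^{ρ−1}) + Σ_{i=1}^{e₀} Σ_{μ=d_{i−1}+1}^{d_i} Σ_{ρ=r_i}^{e} (θ_{μ,ρ} + 1)(p^ρ − p^{ρ−1}) = Σ_{ρ=1}^{e} (ı_ρ + 1)(p^ρ − p^{ρ−1}). -/
/- Setting of the jump data and the matrix θ (Saidi/Pop, §3 A):
`p` is a prime, `e ≥ 1`, and `u 1 ≤ … ≤ u e` are the upper ramification jumps (with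
`u 0 = 0`), satisfying `p * u (ρ-1) ≤ u ρ` with strict inequality iff `p ∤ u ρ`.
For each `1 ≤ ρ ≤ e` write `u ρ - p * u (ρ-1) = p * q ρ + ε ρ` with `0 ≤ ε ρ < p`.
The essential indices (those with `q ρ > 0`) are enumerated in increasing order by
`r 1 < … < r e₀`, with the convention `r (e₀+1) = e+1`.  Set `d 0 = 1`,
`d i = d (i-1) + q (r i)` and `N = 1 + q 1 + … + q e`.  The matrix `θ` is defined by
`θ μ 0 = 0`, `θ 1 ρ = p * θ 1 (ρ-1) + ε ρ`, and, for `1 ≤ i ≤ e₀` and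
`d (i-1) < μ ≤ d i`: `θ μ ρ = 0` for `ρ < r i` and `θ μ ρ = p * θ μ (ρ-1) + (p-1)`
for `r i ≤ ρ ≤ e`. -/
/-- **Equality of different degrees in the deformation.**
`∑_{ρ=1}^{e} (θ 1 ρ + 1)(p^ρ - p^(ρ-1))
 + ∑_{i=1}^{e₀} ∑_{μ=d(i-1)+1}^{d i} ∑_{ρ=r i}^{e} (θ μ ρ + 1)(p^ρ - p^(ρ-1))
 = ∑_{ρ=1}^{e} (u ρ + 1)(p^ρ - p^(ρ-1))`. -/
theorem different_degrees_equal
    (p e e₀ N : ℕ) (hp : p.Prime) (he : 1 ≤ e)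
    (u q ε r d : ℕ → ℕ) (θ : ℕ → ℕ → ℕ)
    (hu0 : u 0 = 0)
    (hupos : ∀ ρ ∈ Finset.Icc 1 e, 1 ≤ u ρ)
    (hule : ∀ ρ ∈ Finset.Icc 1 e, p * u (ρ - 1) ≤ u ρ)
    (hult : ∀ ρ ∈ Finset.Icc 1 e, (p * u (ρ - 1) < u ρ ↔ ¬ p ∣ u ρ))
    (hqε : ∀ ρ ∈ Finset.Icc 1 e, u ρ = p * u (ρ - 1) + p * q ρ + ε ρ)
    (hε : ∀ ρ ∈ Finset.Icc 1 e, ε ρ < p)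
    (hrmono : StrictMonoOn r (Set.Icc 1 e₀))
    (hress : ∀ ρ, (ρ ∈ Finset.Icc 1 e ∧ 0 < q ρ) ↔ ∃ i ∈ Finset.Icc 1 e₀, r i = ρ)
    (hrtop : r (e₀ + 1) = e + 1)
    (hd0 : d 0 = 1)
    (hd : ∀ i ∈ Finset.Icc 1 e₀, d i = d (i - 1) + q (r i))
    (hN : N = 1 + ∑ ρ ∈ Finset.Icc 1 e, q ρ)
    (hθ0 : ∀ μ ∈ Finset.Icc 1 N, θ μ 0 = 0)
    (hθ1 : ∀ ρ ∈ Finset.Icc 1 e, θ 1 ρ = p * θ 1 (ρ - 1) + ε ρ)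
    (hθlow : ∀ i ∈ Finset.Icc 1 e₀, ∀ μ, d (i - 1) < μ → μ ≤ d i →
      ∀ ρ, 1 ≤ ρ → ρ < r i → θ μ ρ = 0)
    (hθhigh : ∀ i ∈ Finset.Icc 1 e₀, ∀ μ, d (i - 1) < μ → μ ≤ d i →
      ∀ ρ, r i ≤ ρ → ρ ≤ e → θ μ ρ = p * θ μ (ρ - 1) + (p - 1)) :
    ∑ ρ ∈ Finset.Icc 1 e, (θ 1 ρ + 1) * (p ^ ρ - p ^ (ρ - 1))
      + ∑ i ∈ Finset.Icc 1 e₀, ∑ μ ∈ Finset.Icc (d (i - 1) + 1) (d i),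
          ∑ ρ ∈ Finset.Icc (r i) e, (θ μ ρ + 1) * (p ^ ρ - p ^ (ρ - 1))
      = ∑ ρ ∈ Finset.Icc 1 e, (u ρ + 1) * (p ^ ρ - p ^ (ρ - 1)) := by
  classical
  have hp1 : 1 ≤ p := hp.one_le
  have hNpos : 1 ≤ N := hN ▸ Nat.le_add_right 1 _
  have hr_mem : ∀ i ∈ Finset.Icc 1 e₀, r i ∈ Finset.Icc 1 e ∧ 0 < q (r i) :=
    fun i hi => (hress (r i)).mpr ⟨i, hi, rfl⟩
  -- d i = 1 + partial sum of q ∘ r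
  have hdsum : ∀ i, i ≤ e₀ → d i = 1 + ∑ j ∈ Finset.Icc 1 i, q (r j) := by
    intro i
    induction i with
    | zero => intro _; simp [hd0]
    | succ n ih =>
      intro h
      have h1 : d (n + 1) = d n + q (r (n + 1)) := by
        have := hd (n + 1) (Finset.mem_Icc.mpr ⟨by omega, h⟩)
        simpa using this
      rw [h1, ih (by omega), Finset.sum_Icc_succ_top (by omega)]
      omega
  have hinjOn : ∀ i ≤ e₀, Set.InjOn r (Finset.Icc 1 i : Finset ℕ) := by
    intro i hi x hx y hy hxy
    simp only [Finset.coe_Icc, Set.mem_Icc] at hx hy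
    exact hrmono.injOn ⟨hx.1, le_trans hx.2 hi⟩ ⟨hy.1, le_trans hy.2 hi⟩ hxy
  have hdN : ∀ i, i ≤ e₀ → d i ≤ N := by
    intro i hi
    rw [hdsum i hi, hN]
    have h1 : ∑ j ∈ Finset.Icc 1 i, q (r j)
        = ∑ σ ∈ (Finset.Icc 1 i).image r, q σ :=
      (Finset.sum_image (fun x hx y hy hxy => hinjOn i hi (by simpa using hx) (by simpa using hy) hxy)).symm
    have h2 : (Finset.Icc 1 i).image r ⊆ Finset.Icc 1 e := by
      intro σ hσ
      obtain ⟨j, hj, rfl⟩ := Finset.mem_image.mp hσ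
      have hj' : j ∈ Finset.Icc 1 e₀ := by
        simp only [Finset.mem_Icc] at hj ⊢; exact ⟨hj.1, le_trans hj.2 hi⟩
      exact (hr_mem j hj').1
    have h3 := Finset.sum_le_sum_of_subset (f := q) h2
    omega
  -- Claim A : u ρ = θ 1 ρ + ∑_{σ=1}^ρ q σ * p^(ρ-σ+1)
  have hθ10 : θ 1 0 = 0 := hθ0 1 (Finset.mem_Icc.mpr ⟨le_refl 1, hNpos⟩)
  have hA : ∀ ρ, ρ ≤ e → u ρ = θ 1 ρ + ∑ σ ∈ Finset.Icc 1 ρ, q σ * p ^ (ρ - σ + 1) := by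
    intro ρ
    induction ρ with
    | zero => intro _; simp [hu0, hθ10]
    | succ n ih =>
      intro h
      have hn : n + 1 ∈ Finset.Icc 1 e := Finset.mem_Icc.mpr ⟨by omega, h⟩
      have h1 : u (n + 1) = p * u n + p * q (n + 1) + ε (n + 1) := by
        have := hqε (n + 1) hn; simpa using this
      have h2 : θ 1 (n + 1) = p * θ 1 n + ε (n + 1) := by
        have := hθ1 (n + 1) hn; simpa using this
      have h3 : ∑ σ ∈ Finset.Icc 1 (n + 1), q σ * p ^ (n + 1 - σ + 1)
          = p * ∑ σ ∈ Finset.Icc 1 n, q σ * p ^ (n - σ + 1) + p * q (n + 1) := by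
        rw [Finset.sum_Icc_succ_top (by omega), Finset.mul_sum]
        have h4 : ∀ σ ∈ Finset.Icc 1 n, q σ * p ^ (n + 1 - σ + 1)
            = p * (q σ * p ^ (n - σ + 1)) := by
          intro σ hσ
          have hσ' : σ ≤ n := (Finset.mem_Icc.mp hσ).2
          have : n + 1 - σ + 1 = (n - σ + 1) + 1 := by omega
          rw [this, pow_succ]; ring
        rw [Finset.sum_congr rfl h4]
        have : n + 1 - (n + 1) + 1 = 1 := by omega
        rw [this, pow_one]; ring
      rw [h1, h2, h3, ih (by omega), Nat.mul_add]
      ring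
  -- Claim B : θ μ ρ + 1 = p ^ (ρ - r i + 1)
  have hB : ∀ i ∈ Finset.Icc 1 e₀, ∀ μ, d (i - 1) < μ → μ ≤ d i →
      ∀ ρ, r i ≤ ρ → ρ ≤ e → θ μ ρ + 1 = p ^ (ρ - r i + 1) := by
    intro i hi μ hμ1 hμ2 ρ
    have hie : i ≤ e₀ := (Finset.mem_Icc.mp hi).2
    have hi1 : 1 ≤ i := (Finset.mem_Icc.mp hi).1
    have hri : 1 ≤ r i := (Finset.mem_Icc.mp (hr_mem i hi).1).1
    have hdprev : 1 ≤ d (i - 1) := by rw [hdsum (i - 1) (by omega)]; omega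
    have hμN : μ ≤ N := le_trans hμ2 (hdN i hie)
    induction ρ with
    | zero => intro h _; omega
    | succ n ih =>
      intro hr1 hr2
      have hrec : θ μ (n + 1) = p * θ μ n + (p - 1) := by
        have := hθhigh i hi μ hμ1 hμ2 (n + 1) hr1 hr2; simpa using this
      by_cases hc : r i ≤ n
      · have hihn := ih hc (by omega)
        have : n + 1 - r i + 1 = (n - r i + 1) + 1 := by omega
        rw [hrec, this, pow_succ, ← hihn]
        have : p * θ μ n + (p - 1) + 1 = p * (θ μ n + 1) := by
          have := hp.two_le; ring_nf; omega
        rw [this]; ring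
      · have hreq : r i = n + 1 := by omega
        have hθn : θ μ n = 0 := by
          rcases Nat.eq_zero_or_pos n with h0 | h0
          · rw [h0]; exact hθ0 μ (Finset.mem_Icc.mpr ⟨by omega, hμN⟩)
          · exact hθlow i hi μ hμ1 hμ2 n h0 (by omega)
        rw [hrec, hθn, hreq]
        simp
        omega
  -- compute the second sum
  have hLHS2 : ∀ i ∈ Finset.Icc 1 e₀,
      ∑ μ ∈ Finset.Icc (d (i - 1) + 1) (d i),
        ∑ ρ ∈ Finset.Icc (r i) e, (θ μ ρ + 1) * (p ^ ρ - p ^ (ρ - 1))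
      = q (r i) * ∑ ρ ∈ Finset.Icc (r i) e, p ^ (ρ - r i + 1) * (p ^ ρ - p ^ (ρ - 1)) := by
    intro i hi
    have hdi : d i = d (i - 1) + q (r i) := hd i hi
    have h1 : ∀ μ ∈ Finset.Icc (d (i - 1) + 1) (d i),
        ∑ ρ ∈ Finset.Icc (r i) e, (θ μ ρ + 1) * (p ^ ρ - p ^ (ρ - 1))
        = ∑ ρ ∈ Finset.Icc (r i) e, p ^ (ρ - r i + 1) * (p ^ ρ - p ^ (ρ - 1)) := by
      intro μ hμ
      have hμ' := Finset.mem_Icc.mp hμ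
      refine Finset.sum_congr rfl fun ρ hρ => ?_
      have hρ' := Finset.mem_Icc.mp hρ
      rw [hB i hi μ (by omega) hμ'.2 ρ hρ'.1 hρ'.2]
    rw [Finset.sum_congr rfl h1, Finset.sum_const, Nat.card_Icc, smul_eq_mul]
    congr 1
    omega
  rw [Finset.sum_congr rfl hLHS2]
  -- rewrite RHS using Claim A
  have hRHS : ∀ ρ ∈ Finset.Icc 1 e, (u ρ + 1) * (p ^ ρ - p ^ (ρ - 1))
      = (θ 1 ρ + 1) * (p ^ ρ - p ^ (ρ - 1))
        + ∑ σ ∈ Finset.Icc 1 ρ, q σ * p ^ (ρ - σ + 1) * (p ^ ρ - p ^ (ρ - 1)) := by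
    intro ρ hρ
    have hρ' := Finset.mem_Icc.mp hρ
    rw [hA ρ hρ'.2, ← Finset.sum_mul]
    ring
  rw [Finset.sum_congr rfl hRHS, Finset.sum_add_distrib]
  congr 1
  -- swap the double sum
  have hswap : ∑ ρ ∈ Finset.Icc 1 e, ∑ σ ∈ Finset.Icc 1 ρ,
        q σ * p ^ (ρ - σ + 1) * (p ^ ρ - p ^ (ρ - 1))
      = ∑ σ ∈ Finset.Icc 1 e, ∑ ρ ∈ Finset.Icc σ e,
        q σ * p ^ (ρ - σ + 1) * (p ^ ρ - p ^ (ρ - 1)) := by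
    have h := Finset.sum_Ico_Ico_comm 1 (e + 1)
      (fun σ ρ => q σ * p ^ (ρ - σ + 1) * (p ^ ρ - p ^ (ρ - 1)))
    simp only [Finset.Ico_add_one_right_eq_Icc] at h
    rw [← h]
  rw [hswap]
  have hfac : ∀ σ ∈ Finset.Icc 1 e,
      ∑ ρ ∈ Finset.Icc σ e, q σ * p ^ (ρ - σ + 1) * (p ^ ρ - p ^ (ρ - 1))
      = q σ * ∑ ρ ∈ Finset.Icc σ e, p ^ (ρ - σ + 1) * (p ^ ρ - p ^ (ρ - 1)) := by
    intro σ _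
    rw [Finset.mul_sum]
    exact Finset.sum_congr rfl fun ρ _ => by ring
  rw [Finset.sum_congr rfl hfac]
  -- reindex : sum over essential indices = sum over all σ
  set G : ℕ → ℕ := fun σ => ∑ ρ ∈ Finset.Icc σ e, p ^ (ρ - σ + 1) * (p ^ ρ - p ^ (ρ - 1))
    with hG
  have himg : ∑ i ∈ Finset.Icc 1 e₀, q (r i) * G (r i)
      = ∑ σ ∈ (Finset.Icc 1 e₀).image r, q σ * G σ := by
    refine (Finset.sum_image (g := r) (f := fun σ => q σ * G σ) ?_).symm
    intro x hx y hy hxy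
    simp only [Finset.coe_Icc, Set.mem_Icc, Finset.mem_coe, Finset.mem_Icc] at hx hy
    exact hrmono.injOn ⟨hx.1, hx.2⟩ ⟨hy.1, hy.2⟩ hxy
  rw [himg]
  refine Finset.sum_subset ?_ ?_
  · intro σ hσ
    obtain ⟨j, hj, rfl⟩ := Finset.mem_image.mp hσ
    exact (hr_mem j hj).1
  · intro σ hσ hσ'
    have hq0 : q σ = 0 := by
      by_contra hq
      obtain ⟨i, hi, hri⟩ := (hress σ).mp ⟨hσ, Nat.pos_of_ne_zero hq⟩
      exact hσ' (Finset.mem_image.mpr ⟨i, hi, hri⟩)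
    rw [hq0, zero_mul]
end

section
/- (Remark on the Obus–Wewers condition: reformulation (*)'.) Let p be a prime and let u, r, η be integers with u ≥ p², r ≥ 1 and 1 ≤ η ≤ p − 1, and set δ := p·r − η (so δ ≥ 1). Then the following are equivalent: (a) there is no integer m satisfying both δ < p·m and p·m·(δ + (p−1)·u) ≤ δ·(δ + p·u); (b) r ≤ η. -/
/-- **Reformulation (*)' of the Obus–Wewers condition.** Let `p` be a prime and `u, r, η`
integers with `u ≥ p²`, `r ≥ 1`, `1 ≤ η ≤ p - 1`, and set `δ := p*r - η` (so `δ ≥ 1`).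
Then the following are equivalent: (a) there is no integer `m` with `δ < p*m` and
`p*m*(δ + (p-1)*u) ≤ δ*(δ + p*u)`; (b) `r ≤ η`. -/
theorem obus_wewers_reformulation (p : ℕ) (hp : p.Prime) (u r η : ℤ)
    (hu : (p : ℤ) ^ 2 ≤ u) (hr : 1 ≤ r) (hη1 : 1 ≤ η) (hη2 : η ≤ (p : ℤ) - 1) :
    (¬ ∃ m : ℤ, (p : ℤ) * r - η < (p : ℤ) * m ∧
        (p : ℤ) * m * (((p : ℤ) * r - η) + ((p : ℤ) - 1) * u)
          ≤ ((p : ℤ) * r - η) * (((p : ℤ) * r - η) + (p : ℤ) * u))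
      ↔ r ≤ η := by
  have hp2 : (2 : ℤ) ≤ (p : ℤ) := by exact_mod_cast hp.two_le
  constructor
  · intro h
    by_contra hle
    push_neg at hle
    have hre : η + 1 ≤ r := hle
    apply h
    refine ⟨r, by nlinarith, ?_⟩
    nlinarith [mul_nonneg (mul_nonneg (by linarith : (0:ℤ) ≤ (p:ℤ))
        (by linarith : (0:ℤ) ≤ u - (p:ℤ)^2)) (by linarith : (0:ℤ) ≤ r - η),
      mul_nonneg (mul_nonneg (by linarith : (0:ℤ) ≤ (p:ℤ))
        (by nlinarith : (0:ℤ) ≤ (p:ℤ)^2 - η)) (by linarith : (0:ℤ) ≤ r - η - 1),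
      mul_nonneg (mul_nonneg (by linarith : (0:ℤ) ≤ (p:ℤ) - 1)
        (by linarith : (0:ℤ) ≤ (p:ℤ) - 1 - η)) (by linarith : (0:ℤ) ≤ (p:ℤ) - 1 + η),
      mul_nonneg (by linarith : (0:ℤ) ≤ (p:ℤ)) (by linarith : (0:ℤ) ≤ (p:ℤ) - 1 - η),
      sq_nonneg ((p:ℤ) - 1)]
  · rintro hle ⟨m, h1, h2⟩
    have hrm : r ≤ m := by
      have : (p : ℤ) * (r - 1) < (p : ℤ) * m := by nlinarith
      have := lt_of_mul_lt_mul_left this (by linarith : (0:ℤ) ≤ (p:ℤ))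
      linarith
    have hδ1 : 1 ≤ (p : ℤ) * r - η := by nlinarith
    have hupos : (0 : ℤ) < u := by nlinarith
    nlinarith [mul_le_mul_of_nonneg_right (mul_le_mul_of_nonneg_left hrm (by linarith : (0:ℤ) ≤ (p:ℤ)))
        (by nlinarith : (0:ℤ) ≤ ((p : ℤ) * r - η) + ((p : ℤ) - 1) * u),
      mul_nonneg (mul_nonneg (by linarith : (0:ℤ) ≤ (p:ℤ)) hupos.le)
        (sub_nonneg.2 hle),
      hδ1]
end
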